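/- For an odd prime p, ∑_{c=1}^{p-1} (-1)^{c+1}/c ≡ (2^p - 2)/p (mod p), as a congruence of p-integral rational numbers. -/

import Mathlib

open Finset

private lemma aux_choose (p : ℕ) (hp : p.Prime) : ∀ k, k < p - 1 →
    (((p - 1).choose k : ZMod p) = (-1) ^ k) := by
  intro k
  induction k with
  | zero => simp
  | succ k ih =>
    intro hk
    have hk' : k < p - 1 := Nat.lt_of_succ_lt hk
    have hpk : k + 1 < p := lt_of_lt_of_le hk (Nat.sub_le p 1)
    have hdvd : p ∣ p.choose (k + 1) :=
      Nat.Prime.dvd_choose_self hp (Nat.succ_ne_zero k) hpk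
    have hpascal : (p - 1).choose k + (p - 1).choose (k + 1) = p.choose (k + 1) := by
      have h := Nat.choose_succ_succ (p - 1) k
      have e1 : (p - 1) + 1 = p := Nat.succ_pred_eq_of_pos hp.pos
      rw [Nat.succ_eq_add_one, Nat.succ_eq_add_one, e1] at h
      omega
    have h0 : ((p.choose (k + 1) : ZMod p)) = 0 :=
      (ZMod.natCast_eq_zero_iff _ _).mpr hdvd
    have := congrArg (Nat.cast : ℕ → ZMod p) hpascal
    push_cast at this
    rw [h0] at this
    have : ((p - 1).choose (k + 1) : ZMod p) = -((p - 1).choose k : ZMod p) := by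
      linear_combination this
    rw [this, ih hk', pow_succ]
    ring

theorem stmt_3 (p : ℕ) (hp : p.Prime) (hodd : Odd p) :
    (∑ c ∈ Finset.Icc 1 (p - 1), (-1 : ℚ) ^ (c + 1) / c) - ((2 ^ p - 2 : ℚ) / p) = 0 ∨
    1 ≤ padicValRat p ((∑ c ∈ Finset.Icc 1 (p - 1), (-1 : ℚ) ^ (c + 1) / c) -
      ((2 ^ p - 2 : ℚ) / p)) := by
  haveI : Fact p.Prime := ⟨hp⟩
  have hp2 : 2 ≤ p := hp.two_le
  have hpQ : (p : ℚ) ≠ 0 := Nat.cast_ne_zero.mpr hp.pos.ne'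
  set S : Finset ℕ := Finset.Icc 1 (p - 1) with hSdef
  have hSIco : S = Finset.Ico 1 p := by
    rw [hSdef, ← Finset.Ico_add_one_right_eq_Icc]
    congr 1
    omega
  have hcne : ∀ c ∈ S, (c : ℚ) ≠ 0 := by
    intro c hc
    have := (Finset.mem_Icc.mp hc).1
    exact_mod_cast Nat.one_le_iff_ne_zero.mp this
  -- Step 1: (2^p - 2)/p = ∑ choose p c / p
  have hsum : (∑ c ∈ S, (p.choose c : ℚ)) = 2 ^ p - 2 := by
    have h := Nat.sum_range_choose p
    have h1 : ∑ c ∈ Finset.range (p + 1), (p.choose c : ℚ) = 2 ^ p := by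
      exact_mod_cast congrArg (Nat.cast : ℕ → ℚ) h
    rw [Finset.range_eq_Ico] at h1
    rw [Finset.sum_Ico_succ_top (Nat.zero_le p)] at h1
    rw [Finset.sum_eq_sum_Ico_succ_bot hp.pos] at h1
    rw [hSIco]
    simp only [Nat.choose_zero_right, Nat.choose_self, Nat.cast_one] at h1
    linarith
  -- Step 2: rewrite the difference as a single sum
  have key : (∑ c ∈ S, (-1 : ℚ) ^ (c + 1) / c) - ((2 ^ p - 2 : ℚ) / p)
      = ∑ c ∈ S, (((-1 : ℚ) ^ (c + 1) - ((p - 1).choose (c - 1) : ℚ)) / c) := by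
    rw [← hsum, Finset.sum_div, ← Finset.sum_sub_distrib]
    refine Finset.sum_congr rfl fun c hc => ?_
    obtain ⟨hc1, hc2⟩ := Finset.mem_Icc.mp hc
    have hcq : (c : ℚ) ≠ 0 := hcne c hc
    have hid : (p.choose c : ℚ) / p = ((p - 1).choose (c - 1) : ℚ) / c := by
      have h := Nat.add_one_mul_choose_eq (p - 1) (c - 1)
      have e1 : (p - 1) + 1 = p := Nat.succ_pred_eq_of_pos hp.pos
      have e2 : (c - 1) + 1 = c := Nat.succ_pred_eq_of_pos hc1
      rw [e1, e2] at h
      rw [div_eq_div_iff hpQ hcq]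
      exact_mod_cast h.symm.trans (mul_comm p _)
    rw [hid, div_sub_div_same]
  -- Step 3: each numerator is divisible by p
  have hdvd : ∀ c ∈ S, (p : ℤ) ∣ ((-1) ^ (c + 1) - ((p - 1).choose (c - 1) : ℤ)) := by
    intro c hc
    obtain ⟨hc1, hc2⟩ := Finset.mem_Icc.mp hc
    rw [← ZMod.intCast_zmod_eq_zero_iff_dvd]
    push_cast
    have hlt : c - 1 < p - 1 := by omega
    rw [aux_choose p hp (c - 1) hlt]
    have : c + 1 = (c - 1) + 2 := by omega
    rw [this, pow_add]
    ring
  set m : ℕ → ℤ := fun c => ((-1) ^ (c + 1) - ((p - 1).choose (c - 1) : ℤ)) / p with hm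
  have hmul : ∀ c ∈ S, ((-1 : ℤ) ^ (c + 1) - ((p - 1).choose (c - 1) : ℤ)) = p * m c :=
    fun c hc => (Int.mul_ediv_cancel' (hdvd c hc)).symm
  -- Step 4: factor out p
  have key2 : (∑ c ∈ S, (-1 : ℚ) ^ (c + 1) / c) - ((2 ^ p - 2 : ℚ) / p)
      = (p : ℚ) * ∑ c ∈ S, (m c : ℚ) / c := by
    rw [key, Finset.mul_sum]
    refine Finset.sum_congr rfl fun c hc => ?_
    have h := hmul c hc
    have h' : ((-1 : ℚ) ^ (c + 1) - ((p - 1).choose (c - 1) : ℚ)) = (p : ℚ) * (m c : ℚ) := by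
      exact_mod_cast congrArg (Int.cast : ℤ → ℚ) h
    rw [h', mul_div_assoc]
  -- Step 5: common denominator
  set Dn : ℕ := ∏ c ∈ S, c with hDn
  set A : ℤ := ∑ c ∈ S, m c * ∏ x ∈ S.erase c, (x : ℤ) with hA
  have hDnpos : 0 < Dn := Finset.prod_pos (fun c hc => (Finset.mem_Icc.mp hc).1)
  have hDq : (Dn : ℚ) ≠ 0 := Nat.cast_ne_zero.mpr hDnpos.ne'
  have hfrac : (∑ c ∈ S, (m c : ℚ) / c) = (A : ℚ) / (Dn : ℚ) := by
    rw [hA]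
    push_cast
    rw [Finset.sum_div]
    refine Finset.sum_congr rfl fun c hc => ?_
    have hprod : (c : ℚ) * ∏ x ∈ S.erase c, (x : ℚ) = (Dn : ℚ) := by
      rw [hDn]
      push_cast
      exact Finset.mul_prod_erase S _ hc
    have hPne : (∏ x ∈ S.erase c, (x : ℚ)) ≠ 0 :=
      Finset.prod_ne_zero_iff.mpr fun x hx => hcne x (Finset.mem_of_mem_erase hx)
    rw [div_eq_div_iff (hcne c hc) hDq, ← hprod]
    ring
  have hdiff : (∑ c ∈ S, (-1 : ℚ) ^ (c + 1) / c) - ((2 ^ p - 2 : ℚ) / p)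
      = ((p * A : ℤ) : ℚ) / (Dn : ℚ) := by
    rw [key2, hfrac]
    push_cast
    ring
  by_cases hA0 : A = 0
  · left; rw [hdiff, hA0]; simp
  · right
    rw [hdiff]
    have hpA : ((p * A : ℤ) : ℚ) ≠ 0 := by
      exact_mod_cast mul_ne_zero (by exact_mod_cast hp.pos.ne') hA0
    rw [padicValRat.div hpA hDq, padicValRat.of_int, padicValRat.of_nat]
    have hnd : ¬ p ∣ Dn := by
      rw [hDn]
      intro h
      obtain ⟨c, hc, hdc⟩ := (Nat.Prime.prime hp).dvd_finset_prod_iff _ |>.mp h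
      obtain ⟨hc1, hc2⟩ := Finset.mem_Icc.mp hc
      have := Nat.le_of_dvd (by omega) hdc
      omega
    rw [padicValNat.eq_zero_of_not_dvd hnd]
    have hval : padicValInt p (p * A) = 1 + padicValInt p A := by
      unfold padicValInt
      rw [Int.natAbs_mul, Int.natAbs_natCast,
        padicValNat.mul (by exact hp.pos.ne') (Int.natAbs_ne_zero.mpr hA0),
        padicValNat.self hp.one_lt]
    rw [hval]
    omega
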